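/- arXiv:2512.03865 — 3 statements merged into one kernel-verified Lean document; each statement's English description precedes it below -/
import Mathlib

section
/- For every ω ∈ ℝ and every C¹ function φ : ℝ/ℤ → ℝ with φ' > −1, there exists a potential V : ℝ/ℤ → ℝ, unique up to an additive constant, such that V'(t+φ(t)) = φ(t+ω) − 2φ(t) + φ(t−ω) for all t ∈ ℝ/ℤ. Consequently the standard map associated with V admits a rotational invariant curve, parametrized by t ↦ (u(t), v(t)) with u = id + φ and v(t) = ω + φ(t) − φ(t−ω), on which its dynamics is conjugated to the rigid rotation R_ω : x ↦ x+ω by the circle diffeomorphism u. The essential point is that the function w = (φ∘R_ω − 2φ + φ∘R_{−ω})∘u^{−1} has zero average over ℝ/ℤ. -/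
/-!
Statement 4 (Lemma: standard maps with a prescribed rotational invariant curve).
For every `ω ∈ ℝ` and every C¹ function `φ : ℝ/ℤ → ℝ` with `φ' > −1` there exists a
potential `V`, unique up to an additive constant, with
`V'(t+φ(t)) = φ(t+ω) − 2φ(t) + φ(t−ω)`; the associated standard map then admits the
rotational invariant curve `t ↦ (u(t), v(t))`, `u = id + φ`,
`v(t) = ω + φ(t) − φ(t−ω)`, on which it is conjugate to the rigid rotation `R_ω` by `u`.
The essential point is that `w = (φ∘R_ω − 2φ + φ∘R_{−ω}) ∘ u⁻¹` has zero average.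
-/

open Real Set

noncomputable section

/-- Lift of the (Chirikov) standard map associated with the potential `V`. -/
def stdMap (V : ℝ → ℝ) : ℝ × ℝ → ℝ × ℝ :=
  fun z => (z.1 + z.2 + deriv V z.1, z.2 + deriv V z.1)

noncomputable section AuxRIC

namespace AuxRIC

/-- key integral identity -/
theorem key_integral (ω : ℝ) (φ : ℝ → ℝ)
    (hper : ∀ t, φ (t + 1) = φ t) (hC1 : ContDiff ℝ 1 φ) :
    ∫ t in (0:ℝ)..1, (1 + deriv φ t) * (φ (t + ω) - 2 * φ t + φ (t - ω)) = 0 := by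
  have hφc : Continuous φ := hC1.continuous
  have hφd : Differentiable ℝ φ := hC1.differentiable one_ne_zero
  have hφ'c : Continuous (deriv φ) := hC1.continuous_deriv le_rfl
  have hφ'per : ∀ t, deriv φ (t + 1) = deriv φ t := by
    intro t
    have h : (fun x => φ (x + 1)) = φ := funext hper
    calc deriv φ (t + 1) = deriv (fun x => φ (x + 1)) t := (deriv_comp_add_const φ 1 t).symm
    _ = deriv φ t := by rw [h]
  -- shifted integrals over a period
  have hshift : ∀ f : ℝ → ℝ, (∀ t, f (t + 1) = f t) → ∀ c : ℝ,
      (∫ t in (0:ℝ)..1, f (t + c)) = ∫ t in (0:ℝ)..1, f t := by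
    intro f hf c
    rw [intervalIntegral.integral_comp_add_right, show (0:ℝ) + c = c by ring,
      show (1:ℝ) + c = c + 1 by ring]
    simpa using (show Function.Periodic f 1 from hf).intervalIntegral_add_eq c 0
  have hint : ∀ f : ℝ → ℝ, Continuous f → IntervalIntegrable f MeasureTheory.volume 0 1 :=
    fun f hf => hf.intervalIntegrable 0 1
  have cplus : Continuous fun t : ℝ => φ (t + ω) :=
    hφc.comp (continuous_id.add continuous_const)
  have cminus : Continuous fun t : ℝ => φ (t - ω) :=
    hφc.comp (continuous_id.sub continuous_const)
  have c'plus : Continuous fun t : ℝ => deriv φ (t + ω) :=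
    hφ'c.comp (continuous_id.add continuous_const)
  have e1 : Continuous fun t : ℝ => deriv φ t * φ (t + ω) := hφ'c.mul cplus
  have e2 : Continuous fun t : ℝ => deriv φ t * φ t := hφ'c.mul hφc
  have e3 : Continuous fun t : ℝ => deriv φ t * φ (t - ω) := hφ'c.mul cminus
  have e4 : Continuous fun t : ℝ => φ t * deriv φ (t + ω) := hφc.mul c'plus
  have hb : φ (1:ℝ) = φ 0 := by simpa using hper 0
  -- ∫ g = 0
  have hg0 : (∫ t in (0:ℝ)..1, (φ (t + ω) - 2 * φ t + φ (t - ω))) = 0 := by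
    rw [intervalIntegral.integral_add (f := fun t => φ (t + ω) - 2 * φ t) (g := fun t => φ (t - ω)) ((cplus.sub (continuous_const.mul hφc)).intervalIntegrable 0 1)
        (cminus.intervalIntegrable 0 1),
      intervalIntegral.integral_sub (f := fun t => φ (t + ω)) (g := fun t => 2 * φ t) (cplus.intervalIntegrable 0 1)
        ((continuous_const.mul hφc).intervalIntegrable 0 1),
      intervalIntegral.integral_const_mul]
    have h1 := hshift φ hper ω
    have h2 : (∫ t in (0:ℝ)..1, φ (t - ω)) = ∫ t in (0:ℝ)..1, φ t := by
      simpa [sub_eq_add_neg] using hshift φ hper (-ω)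
    rw [h1, h2]; ring
  -- ∫ φ' φ = 0
  have hI2 : (∫ t in (0:ℝ)..1, deriv φ t * φ t) = 0 := by
    have hF : ∀ t ∈ uIcc (0:ℝ) 1, HasDerivAt (fun s => φ s * φ s)
        (deriv φ t * φ t + φ t * deriv φ t) t := fun t _ =>
      ((hφd t).hasDerivAt).mul ((hφd t).hasDerivAt)
    have h := intervalIntegral.integral_eq_sub_of_hasDerivAt hF
      ((e2.add (hφc.mul hφ'c)).intervalIntegrable 0 1)
    rw [intervalIntegral.integral_add (g := fun t => φ t * deriv φ t) (hint _ e2) (hint _ (hφc.mul hφ'c)), hb] at h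
    have hcomm : (∫ t in (0:ℝ)..1, φ t * deriv φ t) = ∫ t in (0:ℝ)..1, deriv φ t * φ t := by
      congr 1; funext t; ring
    rw [hcomm] at h; linarith
  -- ∫ φ'(t) φ(t+ω) + ∫ φ(t) φ'(t+ω) = 0
  have hd_shift : ∀ t : ℝ, HasDerivAt (fun s => φ (s + ω)) (deriv φ (t + ω)) t := fun t =>
    HasDerivAt.comp_add_const t ω (hφd (t + ω)).hasDerivAt
  have hIJ : (∫ t in (0:ℝ)..1, deriv φ t * φ (t + ω)) +
      ∫ t in (0:ℝ)..1, φ t * deriv φ (t + ω) = 0 := by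
    have hF : ∀ t ∈ uIcc (0:ℝ) 1, HasDerivAt (fun s => φ s * φ (s + ω))
        (deriv φ t * φ (t + ω) + φ t * deriv φ (t + ω)) t := fun t _ =>
      ((hφd t).hasDerivAt).mul (hd_shift t)
    have h := intervalIntegral.integral_eq_sub_of_hasDerivAt hF
      ((e1.add e4).intervalIntegrable 0 1)
    rw [intervalIntegral.integral_add (hint _ e1) (hint _ e4), hb, zero_add,
      show (1:ℝ) + ω = ω + 1 by ring, hper ω] at h
    linarith
  -- ∫ φ(t) φ'(t+ω) = ∫ φ'(t) φ(t-ω)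
  have hJ3 : (∫ t in (0:ℝ)..1, φ t * deriv φ (t + ω)) =
      ∫ t in (0:ℝ)..1, deriv φ t * φ (t - ω) := by
    have h := hshift (fun t => φ (t - ω) * deriv φ t)
      (fun t => by
        show φ (t + 1 - ω) * deriv φ (t + 1) = φ (t - ω) * deriv φ t
        rw [show t + 1 - ω = t - ω + 1 by ring, hper (t - ω), hφ'per t]) ω
    calc (∫ t in (0:ℝ)..1, φ t * deriv φ (t + ω))
        = ∫ t in (0:ℝ)..1, φ (t + ω - ω) * deriv φ (t + ω) := by
          congr 1; funext t; rw [add_sub_cancel_right]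
      _ = ∫ t in (0:ℝ)..1, φ (t - ω) * deriv φ t := h
      _ = ∫ t in (0:ℝ)..1, deriv φ t * φ (t - ω) := by congr 1; funext t; ring
  -- assemble
  have hsplit : (∫ t in (0:ℝ)..1, (1 + deriv φ t) * (φ (t + ω) - 2 * φ t + φ (t - ω)))
      = (∫ t in (0:ℝ)..1, (φ (t + ω) - 2 * φ t + φ (t - ω)))
        + ((∫ t in (0:ℝ)..1, deriv φ t * φ (t + ω))
          - 2 * (∫ t in (0:ℝ)..1, deriv φ t * φ t)
          + ∫ t in (0:ℝ)..1, deriv φ t * φ (t - ω)) := by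
    have hcg : Continuous fun t => φ (t + ω) - 2 * φ t + φ (t - ω) :=
      (cplus.sub (continuous_const.mul hφc)).add cminus
    rw [show (fun t => (1 + deriv φ t) * (φ (t + ω) - 2 * φ t + φ (t - ω)))
        = fun t => (φ (t + ω) - 2 * φ t + φ (t - ω))
          + ((deriv φ t * φ (t + ω) - 2 * (deriv φ t * φ t)) + deriv φ t * φ (t - ω)) from
        funext fun t => by ring]
    rw [intervalIntegral.integral_add (g := fun t => (deriv φ t * φ (t + ω) - 2 * (deriv φ t * φ t)) + deriv φ t * φ (t - ω)) (hint _ hcg)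
        (hint _ (((e1.sub (continuous_const.mul e2))).add e3)),
      intervalIntegral.integral_add (f := fun t => deriv φ t * φ (t + ω) - 2 * (deriv φ t * φ t)) (hint _ (e1.sub (continuous_const.mul e2))) (hint _ e3),
      intervalIntegral.integral_sub (g := fun t => 2 * (deriv φ t * φ t)) (hint _ e1) (hint _ (continuous_const.mul e2)),
      intervalIntegral.integral_const_mul]
  rw [hsplit, hg0, hI2, ← hJ3]
  linarith

end AuxRIC
end AuxRIC

/-- **Lemma (standard map with a prescribed RIC).** -/
theorem standard_map_with_prescribed_invariant_curve
    (ω : ℝ) (φ : ℝ → ℝ)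
    (hper : ∀ t, φ (t + 1) = φ t)
    (hC1 : ContDiff ℝ 1 φ)
    (hφ' : ∀ t, -1 < deriv φ t) :
    -- existence of the potential
    (∃ V : ℝ → ℝ, (∀ x, V (x + 1) = V x) ∧ Differentiable ℝ V ∧
        ∀ t, deriv V (t + φ t) = φ (t + ω) - 2 * φ t + φ (t - ω)) ∧
    -- uniqueness of the potential up to an additive constant
    (∀ V₁ V₂ : ℝ → ℝ,
        ((∀ x, V₁ (x + 1) = V₁ x) ∧ Differentiable ℝ V₁ ∧
          ∀ t, deriv V₁ (t + φ t) = φ (t + ω) - 2 * φ t + φ (t - ω)) →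
        ((∀ x, V₂ (x + 1) = V₂ x) ∧ Differentiable ℝ V₂ ∧
          ∀ t, deriv V₂ (t + φ t) = φ (t + ω) - 2 * φ t + φ (t - ω)) →
        ∃ c : ℝ, ∀ x, V₁ x = V₂ x + c) ∧
    -- the curve `t ↦ (u(t), v(t))` is invariant and conjugates the dynamics to `R_ω`
    (∀ V : ℝ → ℝ, (∀ x, V (x + 1) = V x) → Differentiable ℝ V →
        (∀ t, deriv V (t + φ t) = φ (t + ω) - 2 * φ t + φ (t - ω)) →
        ∀ t, stdMap V (t + φ t, ω + φ t - φ (t - ω)) =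
          ((t + ω) + φ (t + ω), ω + φ (t + ω) - φ ((t + ω) - ω))) ∧
    -- the function `w` with `w ∘ (id + φ) = φ∘R_ω − 2φ + φ∘R_{−ω}` has zero average
    (∀ w : ℝ → ℝ, (∀ t, w (t + φ t) = φ (t + ω) - 2 * φ t + φ (t - ω)) →
        ∫ x in (0:ℝ)..1, w x = 0) := by
  have hφc : Continuous φ := hC1.continuous
  have hφd : Differentiable ℝ φ := hC1.differentiable one_ne_zero
  have hφ'c : Continuous (deriv φ) := hC1.continuous_deriv le_rfl
  set u : ℝ → ℝ := fun t => t + φ t with hu_def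
  have huD : ∀ t, HasDerivAt u (1 + deriv φ t) t := fun t =>
    (hasDerivAt_id t).add (hφd t).hasDerivAt
  have humono : StrictMono u := strictMono_of_deriv_pos fun t => by
    rw [(huD t).deriv]; linarith [hφ' t]
  have huc : Continuous u := continuous_id.add hφc
  have hu1 : ∀ s : ℝ, u (s + 1) = u s + 1 := by
    intro s; show s + 1 + φ (s + 1) = s + φ s + 1; rw [hper s]; ring
  have hun : ∀ (t : ℝ) (n : ℕ), u (t + n) = u t + n := by
    intro t n; induction n with
    | zero => simp
    | succ k ih =>
        push_cast
        rw [show t + ((k : ℝ) + 1) = t + (k : ℝ) + 1 by ring, hu1, ih]; ring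
  have husurj : Function.Surjective u := by
    intro y
    obtain ⟨n, hn⟩ := exists_nat_ge (|y - u 0|)
    have habs := abs_le.1 hn
    have hminus : u (-(n : ℝ)) = u 0 - n := by
      have := hun (-(n : ℝ)) n; simp at this; linarith
    have hplus : u (n : ℝ) = u 0 + n := by simpa using hun 0 n
    have hmem : y ∈ Icc (u (-(n : ℝ))) (u (n : ℝ)) := by
      constructor
      · rw [hminus]; linarith [habs.1]
      · rw [hplus]; linarith [habs.2]
    have hsub := intermediate_value_Icc
      (show -(n : ℝ) ≤ (n : ℝ) by have : (0:ℝ) ≤ n := n.cast_nonneg; linarith)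
      huc.continuousOn
    obtain ⟨t, _, ht⟩ := hsub hmem
    exact ⟨t, ht⟩
  set e := StrictMono.orderIsoOfSurjective u humono husurj with he_def
  set ψ : ℝ → ℝ := fun x => e.symm x with hψ_def
  have hψu : ∀ x, u (ψ x) = x := fun x =>
    StrictMono.orderIsoOfSurjective_self_symm_apply u humono husurj x
  have huψ : ∀ t, ψ (u t) = t := fun t =>
    StrictMono.orderIsoOfSurjective_symm_apply_self u humono husurj t
  have hψc : Continuous ψ := e.symm.continuous
  have hψ1 : ∀ x, ψ (x + 1) = ψ x + 1 := by
    intro x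
    apply humono.injective
    rw [hψu, hu1, hψu]
  -- the function g
  set g : ℝ → ℝ := fun t => φ (t + ω) - 2 * φ t + φ (t - ω) with hg_def
  have hgc : Continuous g :=
    ((hφc.comp (continuous_id.add continuous_const)).sub
      (continuous_const.mul hφc)).add (hφc.comp (continuous_id.sub continuous_const))
  have hgper : ∀ t, g (t + 1) = g t := by
    intro t
    show φ (t + 1 + ω) - 2 * φ (t + 1) + φ (t + 1 - ω) = _
    rw [show t + 1 + ω = (t + ω) + 1 by ring, show t + 1 - ω = (t - ω) + 1 by ring,
      hper (t + ω), hper (t - ω), hper t]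
  -- the function w
  set w : ℝ → ℝ := fun x => g (ψ x) with hw_def
  have hwc : Continuous w := hgc.comp hψc
  have hwu : ∀ t, w (u t) = g t := fun t => by rw [hw_def]; simp only [huψ t]
  have hwper : Function.Periodic w 1 := by
    intro x; show g (ψ (x + 1)) = g (ψ x); rw [hψ1, hgper]
  -- zero average of w
  have havg : ∫ x in (0:ℝ)..1, w x = 0 := by
    have hsubst := intervalIntegral.integral_comp_smul_deriv
      (a := (0:ℝ)) (b := 1) (f := u) (f' := fun t => 1 + deriv φ t) (g := w)
      (fun t _ => huD t) (continuous_const.add hφ'c).continuousOn hwc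
    have hL : (∫ t in (0:ℝ)..1, (1 + deriv φ t) • (w ∘ u) t)
        = ∫ t in (0:ℝ)..1, (1 + deriv φ t) * g t := by
      congr 1; funext t; simp only [Function.comp, smul_eq_mul, hwu t]
    have hR : (∫ x in (u 0)..(u 1), w x) = ∫ x in (0:ℝ)..1, w x := by
      rw [show u 1 = u 0 + 1 by simpa using hu1 0]
      simpa using hwper.intervalIntegral_add_eq (u 0) 0
    rw [hL, hR] at hsubst
    rw [← hsubst]
    exact AuxRIC.key_integral ω φ hper hC1
  -- the potential V
  set V : ℝ → ℝ := fun x => ∫ s in (0:ℝ)..x, w s with hV_def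
  have hVD : ∀ x, HasDerivAt V (w x) x := fun x =>
    (hwc.integral_hasStrictDerivAt 0 x).hasDerivAt
  have hVd : Differentiable ℝ V := fun x => (hVD x).differentiableAt
  have hV' : ∀ x, deriv V x = w x := fun x => (hVD x).deriv
  have hVper : ∀ x, V (x + 1) = V x := by
    intro x
    have hadj : (∫ s in (0:ℝ)..x, w s) + (∫ s in x..(x+1), w s) = ∫ s in (0:ℝ)..(x+1), w s :=
      intervalIntegral.integral_add_adjacent_intervals
        (hwc.intervalIntegrable 0 x) (hwc.intervalIntegrable x (x+1))
    have hxp : (∫ s in x..(x+1), w s) = ∫ s in (0:ℝ)..1, w s := by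
      simpa using hwper.intervalIntegral_add_eq x 0
    show (∫ s in (0:ℝ)..(x+1), w s) = ∫ s in (0:ℝ)..x, w s
    rw [← hadj, hxp, havg, add_zero]
  have hVeq : ∀ t, deriv V (t + φ t) = φ (t + ω) - 2 * φ t + φ (t - ω) := by
    intro t
    have : deriv V (u t) = w (u t) := hV' (u t)
    rw [hwu t] at this
    exact this
  refine ⟨⟨V, hVper, hVd, hVeq⟩, ?_, ?_, ?_⟩
  · -- uniqueness
    rintro V₁ V₂ ⟨-, hd₁, he₁⟩ ⟨-, hd₂, he₂⟩
    have hderiv_eq : ∀ x, deriv V₁ x = deriv V₂ x := by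
      intro x
      have h1 := he₁ (ψ x)
      have h2 := he₂ (ψ x)
      rw [show ψ x + φ (ψ x) = x from hψu x] at h1 h2
      rw [h1, h2]
    have hdiff : Differentiable ℝ (fun x => V₁ x - V₂ x) := hd₁.sub hd₂
    have hzero : ∀ x, deriv (fun x => V₁ x - V₂ x) x = 0 := by
      intro x
      rw [deriv_fun_sub (hd₁ x) (hd₂ x), hderiv_eq x, sub_self]
    refine ⟨V₁ 0 - V₂ 0, fun x => ?_⟩
    have := is_const_of_deriv_eq_zero hdiff hzero x 0
    linarith [this]
  · -- invariance
    intro V' _ _ hV'eq t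
    have h := hV'eq t
    simp only [stdMap, h, Prod.mk.injEq]
    refine ⟨by ring, by ring⟩
  · -- zero average
    intro w' hw'
    have : w' = w := by
      funext x
      have h := hw' (ψ x)
      rw [show ψ x + φ (ψ x) = x from hψu x] at h
      rw [h]
    rw [this]; exact havg

end
end

section
/- Let R > 0 and let η₀, η₁ : D_R → ℂ be bounded analytic functions with η₀(0) = 0 and η₀'(0) ≠ 0. Set r_j = R^{−1} sup{|η_j(z)| : |z| < R} for j = 0,1. There is a universal constant c > 0 (one may take c = 1/32) such that if r₀r₁ < c|η₀'(0)|², then η₀ + η₁ has a unique zero x in the open disc of radius R̄ = 2c(|η₀'(0)|/r₀)R centered at 0, and this zero satisfies |x|/R ≤ C r₁/|η₀'(0)| and |η₀'(x) + η₁'(x) − η₀'(0)| ≤ C r₀r₁/|η₀'(0)| for a universal constant C. -/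
/-!
Statement 11 (Lemma zero-pert): perturbation of a simple zero of an analytic function.
-/

open Metric
open scoped NNReal

noncomputable section

/-- `r_j = R⁻¹ sup{|η(z)| : |z| < R}`. -/
def scaledSup (R : ℝ) (η : ℂ → ℂ) : ℝ :=
  R⁻¹ * sSup ((fun z => ‖η z‖) '' ball (0 : ℂ) R)

private lemma le_of_forall_eps (a b : ℝ) (h : ∀ ε : ℝ, 0 < ε → a ≤ b + ε) : a ≤ b := by
  by_contra hc
  push_neg at hc
  have := h ((a - b) / 2) (by linarith)
  linarith

/-- Schwarz-type bound: `‖f z‖ ≤ (M / R) * ‖z‖` for bounded `f` with `f 0 = 0`. -/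
private lemma schwarz_bound {f : ℂ → ℂ} {R M : ℝ} (hR : 0 < R)
    (hd : DifferentiableOn ℂ f (ball 0 R)) (h0 : f 0 = 0)
    (hM : ∀ w ∈ ball (0 : ℂ) R, ‖f w‖ ≤ M) {z : ℂ} (hz : z ∈ ball (0 : ℂ) R) :
    ‖f z‖ ≤ M / R * ‖z‖ := by
  rcases eq_or_ne z 0 with rfl | hz0
  · simp [h0]
  have hzpos : 0 < ‖z‖ := norm_pos_iff.mpr hz0
  refine le_of_forall_eps _ _ fun ε hε => ?_
  set δ : ℝ := ε * R / ‖z‖ with hδdef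
  have hδ : 0 < δ := by positivity
  have hmaps : Set.MapsTo f (ball (0 : ℂ) R) (ball (f 0) (M + δ)) := by
    intro w hw
    rw [mem_ball, h0, dist_zero_right]
    exact lt_of_le_of_lt (hM w hw) (by linarith)
  have key := Complex.dist_le_div_mul_dist_of_mapsTo_ball hd (hmaps.mono_right ball_subset_closedBall) hz
  rw [h0, dist_zero_right, dist_zero_right] at key
  have hδε : δ / R * ‖z‖ = ε := by
    rw [hδdef, div_div, mul_comm ‖z‖ R, mul_comm ε R, mul_div_mul_left ε ‖z‖ hR.ne',
      div_mul_cancel₀ ε hzpos.ne']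
  have : (M + δ) / R * ‖z‖ = M / R * ‖z‖ + ε := by
    rw [← hδε]; ring
  linarith [this ▸ key]

/-- Cauchy-type bound for the derivative at the center. -/
private lemma deriv_center_bound {f : ℂ → ℂ} {c : ℂ} {R M : ℝ} (hR : 0 < R)
    (hd : DifferentiableOn ℂ f (ball c R))
    (hM : ∀ w ∈ ball c R, ‖f w - f c‖ ≤ M) : ‖deriv f c‖ ≤ M / R := by
  refine le_of_forall_eps _ _ fun ε hε => ?_
  have hmaps : Set.MapsTo f (ball c R) (ball (f c) (M + ε * R)) := by
    intro w hw
    rw [mem_ball, dist_eq_norm]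
    exact lt_of_le_of_lt (hM w hw) (by nlinarith)
  have key := Complex.norm_deriv_le_div_of_mapsTo_ball hd (hmaps.mono_right ball_subset_closedBall) hR
  have : (M + ε * R) / R = M / R + ε := by field_simp
  linarith [this ▸ key]

/-- Cauchy-type bound for the derivative at an interior point. -/
private lemma deriv_interior_bound {f : ℂ → ℂ} {R M : ℝ} (hR : 0 < R)
    (hd : DifferentiableOn ℂ f (ball 0 R))
    (hM : ∀ w ∈ ball (0 : ℂ) R, ‖f w‖ ≤ M) {z : ℂ} (hz : z ∈ ball (0 : ℂ) R) :
    ‖deriv f z‖ ≤ 2 * M / (R - ‖z‖) := by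
  have hzR : ‖z‖ < R := by simpa [mem_ball, dist_zero_right] using hz
  have hpos : 0 < R - ‖z‖ := by linarith
  have hsub : ball z (R - ‖z‖) ⊆ ball (0 : ℂ) R := by
    apply ball_subset_ball'
    simp [dist_zero_right]
  refine deriv_center_bound hpos (hd.mono hsub) fun w hw => ?_
  have hw' : w ∈ ball (0 : ℂ) R := hsub hw
  calc ‖f w - f z‖ ≤ ‖f w‖ + ‖f z‖ := norm_sub_le _ _
    _ ≤ 2 * M := by linarith [hM w hw', hM z hz]

set_option maxHeartbeats 2000000 in
/-- **Lemma (perturbation of a simple zero).**  There are universal constants `c`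
(one may take `c = 1/32`) and `C` such that a perturbation `η₀ + η₁` of `η₀` with
`r₀ r₁ < c |η₀'(0)|²` has a unique zero `x` near `0`, with quantitative bounds. -/
theorem zero_perturbation :
    ∃ c C : ℝ, 0 < c ∧ 0 < C ∧
      ∀ (R : ℝ) (η₀ η₁ : ℂ → ℂ), 0 < R →
        AnalyticOnNhd ℂ η₀ (ball 0 R) → AnalyticOnNhd ℂ η₁ (ball 0 R) →
        BddAbove ((fun z => ‖η₀ z‖) '' ball (0 : ℂ) R) →
        BddAbove ((fun z => ‖η₁ z‖) '' ball (0 : ℂ) R) →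
        η₀ 0 = 0 → deriv η₀ 0 ≠ 0 →
        scaledSup R η₀ * scaledSup R η₁ < c * ‖deriv η₀ 0‖ ^ 2 →
        ∃ x : ℂ,
          (x ∈ ball (0 : ℂ) (2 * c * (‖deriv η₀ 0‖ / scaledSup R η₀) * R) ∧
            η₀ x + η₁ x = 0) ∧
          (∀ y : ℂ, y ∈ ball (0 : ℂ) (2 * c * (‖deriv η₀ 0‖ / scaledSup R η₀) * R) →
            η₀ y + η₁ y = 0 → y = x) ∧
          ‖x‖ / R ≤ C * scaledSup R η₁ / ‖deriv η₀ 0‖ ∧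
          ‖deriv η₀ x + deriv η₁ x - deriv η₀ 0‖ ≤
            C * (scaledSup R η₀ * scaledSup R η₁) / ‖deriv η₀ 0‖ := by
  refine ⟨1/32, 16, by norm_num, by norm_num, ?_⟩
  intro R η₀ η₁ hR h₀a h₁a hb₀ hb₁ hz0 hd0 hsmall
  set d : ℂ := deriv η₀ 0 with hd_def
  set a : ℝ := ‖d‖ with ha_def
  have ha : 0 < a := norm_pos_iff.mpr hd0
  set r₀ : ℝ := scaledSup R η₀ with hr₀def
  set r₁ : ℝ := scaledSup R η₁ with hr₁def
  have diff₀ : DifferentiableOn ℂ η₀ (ball 0 R) := h₀a.differentiableOn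
  have diff₁ : DifferentiableOn ℂ η₁ (ball 0 R) := h₁a.differentiableOn
  -- sup bounds
  have hub₀ : ∀ z ∈ ball (0 : ℂ) R, ‖η₀ z‖ ≤ r₀ * R := by
    intro z hz
    have h1 : ‖η₀ z‖ ≤ sSup ((fun z => ‖η₀ z‖) '' ball (0 : ℂ) R) :=
      le_csSup hb₀ ⟨z, hz, rfl⟩
    have h2 : r₀ * R = sSup ((fun z => ‖η₀ z‖) '' ball (0 : ℂ) R) := by
      rw [hr₀def, scaledSup]; field_simp
    linarith
  have hub₁ : ∀ z ∈ ball (0 : ℂ) R, ‖η₁ z‖ ≤ r₁ * R := by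
    intro z hz
    have h1 : ‖η₁ z‖ ≤ sSup ((fun z => ‖η₁ z‖) '' ball (0 : ℂ) R) :=
      le_csSup hb₁ ⟨z, hz, rfl⟩
    have h2 : r₁ * R = sSup ((fun z => ‖η₁ z‖) '' ball (0 : ℂ) R) := by
      rw [hr₁def, scaledSup]; field_simp
    linarith
  have h0mem : (0 : ℂ) ∈ ball (0 : ℂ) R := mem_ball_self hR
  have hr₁0 : 0 ≤ r₁ := by nlinarith [le_trans (norm_nonneg (η₁ 0)) (hub₁ 0 h0mem), hR]
  -- `a ≤ r₀`
  have har₀ : a ≤ r₀ := by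
    have h1 : ‖deriv η₀ 0‖ ≤ (r₀ * R) / R := by
      refine deriv_center_bound hR diff₀ fun w hw => ?_
      rw [hz0, sub_zero]; exact hub₀ w hw
    rw [mul_div_assoc, div_self hR.ne', mul_one] at h1
    exact h1
  have hr₀pos : 0 < r₀ := lt_of_lt_of_le ha har₀
  have hsmall' : r₀ * r₁ < a ^ 2 / 32 := by
    rw [hr₀def, hr₁def] at *
    linarith [hsmall]
  have hr₁a : r₁ < a / 32 := by nlinarith
  -- the radius ρ
  set ρ : ℝ := 2 * (1/32) * (a / r₀) * R with hρdef
  have hρpos : 0 < ρ := by positivity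
  have hρle : ρ ≤ R / 16 := by
    rw [hρdef]
    have : a / r₀ ≤ 1 := (div_le_one hr₀pos).mpr har₀
    nlinarith
  have hρR : ρ < R := by linarith
  have hsubR : closedBall (0 : ℂ) ρ ⊆ ball (0 : ℂ) R :=
    closedBall_subset_ball hρR
  have hρr₀ : r₀ * ρ = a * R / 16 := by
    rw [hρdef]; field_simp; ring
  -- the function h = η₀ - d • id
  set h : ℂ → ℂ := fun z => η₀ z - d * z with hh_def
  have hdiffh : DifferentiableOn ℂ h (ball 0 R) :=
    diff₀.sub (Differentiable.differentiableOn (by fun_prop))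
  have hh0 : h 0 = 0 := by simp [hh_def, hz0]
  have hderivh : ∀ z ∈ ball (0 : ℂ) R, deriv h z = deriv η₀ z - d := by
    intro z hz
    have h1 : DifferentiableAt ℂ η₀ z := (h₀a z hz).differentiableAt
    have h2 : DifferentiableAt ℂ (fun z : ℂ => d * z) z := by fun_prop
    rw [hh_def]
    rw [deriv_fun_sub h1 h2, deriv_const_mul d differentiableAt_fun_id]
    simp
  have hderivh0 : deriv h 0 = 0 := by
    rw [hderivh 0 h0mem]; simp [hd_def]
  have hMh : ∀ z ∈ ball (0 : ℂ) R, ‖h z‖ ≤ 2 * (r₀ * R) := by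
    intro z hz
    have hzR : ‖z‖ < R := by simpa [mem_ball, dist_zero_right] using hz
    have : ‖d * z‖ ≤ r₀ * R := by
      rw [norm_mul, ← ha_def]
      nlinarith [norm_nonneg z, ha]
    calc ‖η₀ z - d * z‖ ≤ ‖η₀ z‖ + ‖d * z‖ := norm_sub_le _ _
      _ ≤ 2 * (r₀ * R) := by linarith [hub₀ z hz]
  -- dslope k
  set k : ℂ → ℂ := dslope h 0 with hk_def
  have hdiffk : DifferentiableOn ℂ k (ball 0 R) :=
    (Complex.differentiableOn_dslope (ball_mem_nhds _ hR)).mpr hdiffh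
  have hk0 : k 0 = 0 := by rw [hk_def, dslope_same]; exact hderivh0
  have hzk : ∀ z : ℂ, z * k z = h z := by
    intro z
    have := sub_smul_dslope h 0 z
    simpa [hh0, smul_eq_mul] using this
  have hSh : ∀ z ∈ ball (0 : ℂ) R, ‖h z‖ ≤ 2 * (r₀ * R) / R * ‖z‖ :=
    fun z hz => schwarz_bound hR hdiffh hh0 hMh hz
  have hMk : ∀ z ∈ ball (0 : ℂ) R, ‖k z‖ ≤ 2 * r₀ := by
    intro z hz
    rcases eq_or_ne z 0 with rfl | hz0'
    · rw [hk0, norm_zero]; positivity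
    have hzpos : 0 < ‖z‖ := norm_pos_iff.mpr hz0'
    have h1 : ‖z‖ * ‖k z‖ = ‖h z‖ := by rw [← norm_mul, hzk]
    have h2 : 2 * (r₀ * R) / R * ‖z‖ = 2 * r₀ * ‖z‖ := by field_simp
    have := hSh z hz
    rw [h2] at this
    rw [← h1] at this
    exact le_of_mul_le_mul_left (by linarith [this]) hzpos
  have hSk : ∀ z ∈ ball (0 : ℂ) R, ‖k z‖ ≤ 2 * r₀ / R * ‖z‖ :=
    fun z hz => schwarz_bound hR hdiffk hk0 hMk hz
  have hCk : ∀ z ∈ ball (0 : ℂ) R, ‖deriv k z‖ ≤ 2 * (2 * r₀) / (R - ‖z‖) :=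
    fun z hz => deriv_interior_bound hR hdiffk hMk hz
  have hderivh_eq : ∀ z ∈ ball (0 : ℂ) R, deriv h z = k z + z * deriv k z := by
    intro z hz
    have hkz : DifferentiableAt ℂ k z := hdiffk.differentiableAt (isOpen_ball.mem_nhds hz)
    have hfun : h = fun w => w * k w := funext fun w => (hzk w).symm
    rw [hfun, deriv_fun_mul differentiableAt_fun_id hkz]
    simp
  -- master bound on derivative of h + η₁ perturbation, on `closedBall 0 ρ`
  have hmaster : ∀ z ∈ closedBall (0 : ℂ) ρ,
      ‖deriv η₀ z + deriv η₁ z - d‖ * R ≤ (94/15) * r₀ * ‖z‖ + (32/15) * (r₁ * R) := by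
    intro z hz
    have hzρ : ‖z‖ ≤ ρ := by simpa [mem_closedBall, dist_zero_right] using hz
    have hzball : z ∈ ball (0 : ℂ) R := hsubR hz
    have hzR : ‖z‖ < R := by simpa [mem_ball, dist_zero_right] using hzball
    have hz16 : ‖z‖ ≤ R / 16 := le_trans hzρ hρle
    have hden : R - R / 16 ≤ R - ‖z‖ := by linarith
    have hdenpos : 0 < R - ‖z‖ := by linarith
    -- bound deriv h z
    have hhd : ‖deriv h z‖ ≤ (94/15) * r₀ * ‖z‖ / R := by
      rw [hderivh_eq z hzball]
      have b1 : ‖k z‖ ≤ 2 * r₀ / R * ‖z‖ := hSk z hzball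
      have b2 : ‖deriv k z‖ ≤ 2 * (2 * r₀) / (R - ‖z‖) := hCk z hzball
      have b3 : 2 * (2 * r₀) / (R - ‖z‖) ≤ 2 * (2 * r₀) / (R * (15/16)) :=
        div_le_div_of_nonneg_left (by positivity) (by linarith) (by linarith)
      have b4 : ‖z‖ * ‖deriv k z‖ ≤ ‖z‖ * (2 * (2 * r₀) / (R * (15/16))) :=
        mul_le_mul_of_nonneg_left (le_trans b2 b3) (norm_nonneg z)
      calc ‖k z + z * deriv k z‖ ≤ ‖k z‖ + ‖z‖ * ‖deriv k z‖ := by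
            rw [← norm_mul z (deriv k z)]; exact norm_add_le _ _
        _ ≤ 2 * r₀ / R * ‖z‖ + ‖z‖ * (2 * (2 * r₀) / (R * (15/16))) := by linarith
        _ = (94/15) * r₀ * ‖z‖ / R := by field_simp; ring
    -- bound deriv η₁ z
    have hd1 : ‖deriv η₁ z‖ ≤ (32/15) * (r₁ * R) / R := by
      have b1 : ‖deriv η₁ z‖ ≤ 2 * (r₁ * R) / (R - ‖z‖) :=
        deriv_interior_bound hR diff₁ hub₁ hzball
      have b2 : 2 * (r₁ * R) / (R - ‖z‖) ≤ 2 * (r₁ * R) / (R * (15/16)) :=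
        div_le_div_of_nonneg_left (by positivity) (by linarith) (by linarith)
      have b3 : 2 * (r₁ * R) / (R * (15/16)) = (32/15) * (r₁ * R) / R := by
        field_simp; ring
      linarith [b3 ▸ le_trans b1 b2]
    have htri : ‖deriv η₀ z + deriv η₁ z - d‖ ≤ ‖deriv h z‖ + ‖deriv η₁ z‖ := by
      have : deriv η₀ z + deriv η₁ z - d = deriv h z + deriv η₁ z := by
        rw [hderivh z hzball]; ring
      rw [this]; exact norm_add_le _ _
    have := add_le_add hhd hd1
    have hfin : ‖deriv η₀ z + deriv η₁ z - d‖ ≤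
        ((94/15) * r₀ * ‖z‖ + (32/15) * (r₁ * R)) / R := by
      rw [add_div]
      exact le_trans htri this
    rw [le_div_iff₀ hR] at hfin
    exact hfin
  -- contraction bound : ‖deriv g z - d‖ ≤ a / 2 on the closed ball
  have hθ : ∀ z ∈ closedBall (0 : ℂ) ρ, ‖deriv η₀ z + deriv η₁ z - d‖ ≤ a / 2 := by
    intro z hz
    have hzρ : ‖z‖ ≤ ρ := by simpa [mem_closedBall, dist_zero_right] using hz
    have hm := hmaster z hz
    have h1 : (94/15) * r₀ * ‖z‖ ≤ (94/15) * (a * R / 16) := by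
      have : r₀ * ‖z‖ ≤ r₀ * ρ := mul_le_mul_of_nonneg_left hzρ hr₀pos.le
      rw [hρr₀] at this
      linarith
    have h2 : (32/15) * (r₁ * R) ≤ (32/15) * (a / 32 * R) := by
      have := mul_le_mul_of_nonneg_right hr₁a.le hR.le
      linarith
    have : ‖deriv η₀ z + deriv η₁ z - d‖ * R ≤ (a / 2) * R := by
      linarith [mul_nonneg ha.le hR.le]
    exact le_of_mul_le_mul_right this hR
  -- the contraction map F
  set F : ℂ → ℂ := fun z => z - (η₀ z + η₁ z) / d with hF_def
  have hF' : ∀ z ∈ closedBall (0 : ℂ) ρ,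
      HasDerivAt F (1 - (deriv η₀ z + deriv η₁ z) / d) z := by
    intro z hz
    have hzball : z ∈ ball (0 : ℂ) R := hsubR hz
    have hd₀z : DifferentiableAt ℂ η₀ z := (h₀a z hzball).differentiableAt
    have hd₁z : DifferentiableAt ℂ η₁ z := (h₁a z hzball).differentiableAt
    exact (hasDerivAt_id z).sub ((hd₀z.hasDerivAt.add hd₁z.hasDerivAt).div_const d)
  have hFd : ∀ z ∈ closedBall (0 : ℂ) ρ,
      ‖1 - (deriv η₀ z + deriv η₁ z) / d‖ ≤ 1/2 := by
    intro z hz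
    have heq : (1 : ℂ) - (deriv η₀ z + deriv η₁ z) / d
        = -((deriv η₀ z + deriv η₁ z - d) / d) := by
      rw [sub_div, div_self hd0]; ring
    rw [heq, norm_neg, norm_div, ← ha_def, div_le_iff₀ ha]
    linarith [hθ z hz]
  have hlip : ∀ u ∈ closedBall (0 : ℂ) ρ, ∀ v ∈ closedBall (0 : ℂ) ρ,
      ‖F u - F v‖ ≤ 1/2 * ‖u - v‖ := by
    intro u hu v hv
    exact Convex.norm_image_sub_le_of_norm_hasDerivWithin_le
      (f' := fun z => 1 - (deriv η₀ z + deriv η₁ z) / d)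
      (fun z hz => (hF' z hz).hasDerivWithinAt) hFd (convex_closedBall _ _) hv hu
  have hF0 : ‖F 0‖ ≤ r₁ * R / a := by
    have : F 0 = -(η₁ 0 / d) := by
      rw [hF_def]; simp [hz0]
    rw [this, norm_neg, norm_div, ← ha_def, div_le_div_iff_of_pos_right ha]
    exact hub₁ 0 h0mem
  have hρhalf : r₁ * R / a < ρ / 2 := by
    rw [div_lt_div_iff₀ ha (by norm_num : (0:ℝ) < 2), hρdef]
    have expand : 2 * (1/32) * (a / r₀) * R * a = a ^ 2 * R / (16 * r₀) := by
      field_simp; ring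
    rw [expand, lt_div_iff₀ (by positivity : (0:ℝ) < 16 * r₀)]
    nlinarith [mul_lt_mul_of_pos_right hsmall' hR]
  have hFmem : ∀ z ∈ closedBall (0 : ℂ) ρ, ‖F z‖ < ρ := by
    intro z hz
    have hzρ : ‖z‖ ≤ ρ := by simpa [mem_closedBall, dist_zero_right] using hz
    have h0cb : (0 : ℂ) ∈ closedBall (0 : ℂ) ρ := mem_closedBall_self hρpos.le
    have h1 : ‖F z - F 0‖ ≤ 1/2 * ‖z - 0‖ := hlip z hz 0 h0cb
    rw [sub_zero] at h1
    calc ‖F z‖ ≤ ‖F z - F 0‖ + ‖F 0‖ := by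
          simpa using norm_add_le (F z - F 0) (F 0)
      _ ≤ 1/2 * ‖z‖ + r₁ * R / a := by linarith
      _ < ρ := by linarith
  -- Banach fixed point
  have hsc : IsComplete (closedBall (0 : ℂ) ρ) := Metric.isClosed_closedBall.isComplete
  have hsf : Set.MapsTo F (closedBall (0 : ℂ) ρ) (closedBall (0 : ℂ) ρ) :=
    fun z hz => mem_closedBall_zero_iff.mpr (hFmem z hz).le
  have hlipOn : LipschitzOnWith (1/2 : ℝ≥0) F (closedBall (0 : ℂ) ρ) := by
    rw [lipschitzOnWith_iff_dist_le_mul]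
    intro u hu v hv
    rw [dist_eq_norm, dist_eq_norm]
    have := hlip u hu v hv
    have hc : ((1/2 : ℝ≥0) : ℝ) = 1/2 := by norm_num
    rw [hc]
    exact this
  have hcontr : ContractingWith (1/2 : ℝ≥0) (hsf.restrict F _ _) :=
    ⟨one_half_lt_one, hlipOn.mapsToRestrict hsf⟩
  obtain ⟨x, hxs, hfx, -, -⟩ := hcontr.exists_fixedPoint' hsc hsf
    (mem_closedBall_self hρpos.le) (edist_ne_top _ _)
  have hgx : η₀ x + η₁ x = 0 := by
    have : x - (η₀ x + η₁ x) / d = x := hfx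
    have h2 : (η₀ x + η₁ x) / d = 0 := by
      have := sub_eq_self.mp this
      exact this
    exact (div_eq_zero_iff.mp h2).resolve_right hd0
  have hxlt : ‖x‖ < ρ := by
    have := hFmem x hxs
    rwa [hfx] at this
  have hxball : x ∈ ball (0 : ℂ) ρ := by
    rwa [mem_ball, dist_zero_right]
  -- a priori bound on ‖x‖
  have hxbound : ‖x‖ ≤ 2 * (r₁ * R) / a := by
    have h0cb : (0 : ℂ) ∈ closedBall (0 : ℂ) ρ := mem_closedBall_self hρpos.le
    have h1 : ‖F x - F 0‖ ≤ 1/2 * ‖x - 0‖ := hlip x hxs 0 h0cb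
    rw [sub_zero] at h1
    have h2 : ‖x‖ ≤ ‖F x - F 0‖ + ‖F 0‖ := by
      conv_lhs => rw [← hfx]
      simpa using norm_add_le (F x - F 0) (F 0)
    have h3 : ‖x‖ ≤ 1/2 * ‖x‖ + r₁ * R / a := by linarith
    have h4 : 1/2 * ‖x‖ ≤ r₁ * R / a := by linarith
    rw [le_div_iff₀ ha] at h4 ⊢
    linarith
  refine ⟨x, ⟨hxball, hgx⟩, ?_, ?_, ?_⟩
  · -- uniqueness
    intro y hy hgy
    have hycb : y ∈ closedBall (0 : ℂ) ρ := ball_subset_closedBall hy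
    have hFy : F y = y := by
      rw [hF_def]
      simp [hgy]
    have h1 : ‖F y - F x‖ ≤ 1/2 * ‖y - x‖ := hlip y hycb x hxs
    rw [hFy, hfx] at h1
    have h0 : ‖y - x‖ = 0 := by linarith [norm_nonneg (y - x)]
    exact sub_eq_zero.mp (norm_eq_zero.mp h0)
  · -- bound on ‖x‖ / R
    rw [div_le_div_iff₀ hR ha]
    have h5 : ‖x‖ * a ≤ 2 * (r₁ * R) := by
      have := mul_le_mul_of_nonneg_right hxbound ha.le
      rwa [div_mul_cancel₀ _ ha.ne'] at this
    linarith [mul_nonneg hr₁0 hR.le]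
  · -- bound on the derivative
    rw [le_div_iff₀ ha]
    have hm := hmaster x (ball_subset_closedBall hxball)
    have hxa : ‖x‖ * a ≤ 2 * (r₁ * R) := by
      have := mul_le_mul_of_nonneg_right hxbound ha.le
      rwa [div_mul_cancel₀ _ ha.ne'] at this
    have h1 : ‖deriv η₀ x + deriv η₁ x - d‖ * R * a ≤
        ((94/15) * r₀ * ‖x‖ + (32/15) * (r₁ * R)) * a :=
      mul_le_mul_of_nonneg_right hm ha.le
    have h2 : (94/15) * r₀ * ‖x‖ * a ≤ (94/15) * r₀ * (2 * (r₁ * R)) := by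
      nlinarith [hr₀pos]
    have h3 : (32/15) * (r₁ * R) * a ≤ (32/15) * (r₁ * R) * r₀ := by
      nlinarith [mul_nonneg hr₁0 hR.le]
    have h4 : ‖deriv η₀ x + deriv η₁ x - d‖ * a * R ≤ 16 * (r₀ * r₁) * R := by
      linarith [mul_nonneg (mul_nonneg hr₀pos.le hr₁0) hR.le]
    have := le_of_mul_le_mul_right (by linarith [h4] : ‖deriv η₀ x + deriv η₁ x - d‖ * a * R ≤ 16 * (r₀ * r₁) * R) hR
    linarith

end
end

section
/- Let λ > 0 and let ū : D_λ → ℂ be analytic; set u(x,y) = y·ū(x,y). Then for every integer r ≥ 1 and every λ' ∈ (0,λ): |u|^{(λ',r)} ≤ ((r+λ')/(1−λ'/λ))·|ū|^{(λ,r−1)}. In particular |∂u/∂x|^{(λ')} ≤ (λλ'/(λ−λ'))·|ū|^{(λ)} and |∂u/∂y|^{(λ')} ≤ (λ/(λ−λ'))·|ū|^{(λ)}. -/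
/-!
Statement 18 (Cauchy estimates on the triangular domains `D_λ`).
-/

open Real Set ENNReal

noncomputable section

/-- The triangular domain `D_λ = {(x,y) ∈ 𝕋₁ × ℂ : |Im x| + |y|/λ < 1}`. -/
def Dtri (lam : ℝ) : Set (ℂ × ℂ) := {p : ℂ × ℂ | |p.1.im| + ‖p.2‖ / lam < 1}

/-- `u(·,y)` is 1-periodic in the first variable. -/
def Per1' (u : ℂ × ℂ → ℂ) : Prop := ∀ z w, u (z + 1, w) = u (z, w)

/-- Partial derivative in the first variable. -/
def pdx (u : ℂ × ℂ → ℂ) : ℂ × ℂ → ℂ := fun p => deriv (fun x => u (x, p.2)) p.1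

/-- Partial derivative in the second variable. -/
def pdy (u : ℂ × ℂ → ℂ) : ℂ × ℂ → ℂ := fun p => deriv (fun y => u (p.1, y)) p.2

/-- The sup "norm" `|u|^{(λ)}` on `D_λ`, valued in `[0,∞]`. -/
def triSup (lam : ℝ) (u : ℂ × ℂ → ℂ) : ℝ≥0∞ :=
  ⨆ p ∈ Dtri lam, (‖u p‖₊ : ℝ≥0∞)

/-- The `C^r` "norm" `|u|^{(λ,r)}` on `D_λ`: the supremum of all partial derivatives
`∂^{j+k} u / ∂x^j ∂y^k` with `j + k ≤ r`, valued in `[0,∞]`. -/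
def triCr (lam : ℝ) (r : ℕ) (u : ℂ × ℂ → ℂ) : ℝ≥0∞ :=
  ⨆ (j : ℕ) (k : ℕ) (_ : j + k ≤ r), triSup lam (pdx^[j] (pdy^[k] u))

namespace CEaux

lemma cauchyBound {f : ℂ → ℂ} {c : ℂ} {δ M : ℝ} (hδ : 0 < δ)
    (hd : ∀ z ∈ Metric.closedBall c δ, DifferentiableAt ℂ f z)
    (hM : ∀ z ∈ Metric.closedBall c δ, ‖f z‖ ≤ M) :
    ‖deriv f c‖ ≤ M / δ := by
  apply Complex.norm_deriv_le_of_forall_mem_sphere_norm_le hδ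
  · refine ⟨fun z hz => (hd z (Metric.ball_subset_closedBall hz)).differentiableWithinAt, ?_⟩
    rw [closure_ball c hδ.ne']
    exact fun z hz => (hd z hz).continuousAt.continuousWithinAt
  · exact fun z hz => hM z (Metric.sphere_subset_closedBall hz)

lemma xEst {lam lam' : ℝ} (hlam' : 0 < lam') (hll : lam' < lam) {v : ℂ × ℂ → ℂ} {M : ℝ}
    (hv : AnalyticOnNhd ℂ v (Dtri lam)) (hM : ∀ q ∈ Dtri lam, ‖v q‖ ≤ M)
    {p : ℂ × ℂ} (hp : p ∈ Dtri lam') :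
    ‖p.2 * pdx v p‖ ≤ lam * lam' / (lam - lam') * M := by
  have hlam : 0 < lam := hlam'.trans hll
  have hdd : 0 < lam - lam' := by linarith
  have hp' : |p.1.im| + ‖p.2‖ / lam' < 1 := hp
  have hpD : p ∈ Dtri lam := by
    have h1 : ‖p.2‖ / lam ≤ ‖p.2‖ / lam' :=
      div_le_div_of_nonneg_left (norm_nonneg _) hlam' hll.le
    show |p.1.im| + ‖p.2‖ / lam < 1
    linarith
  have hM0 : 0 ≤ M := le_trans (norm_nonneg _) (hM p hpD)
  rcases eq_or_ne p.2 0 with h0 | h0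
  · rw [h0, zero_mul, norm_zero]; positivity
  · have htpos : 0 < ‖p.2‖ := norm_pos_iff.mpr h0
    set t := ‖p.2‖ with ht
    set δ := t / lam' - t / lam with hδdef
    have hδ : 0 < δ := by
      have : t / lam < t / lam' := div_lt_div_of_pos_left htpos hlam' hll
      simp only [hδdef]; linarith
    have hsub : ∀ z ∈ Metric.closedBall p.1 δ, (z, p.2) ∈ Dtri lam := by
      intro z hz
      have hz' : ‖z - p.1‖ ≤ δ := by
        rw [Metric.mem_closedBall, dist_eq_norm] at hz; exact hz
      have h1 : |z.im| ≤ |p.1.im| + δ := by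
        have h2 : |(z - p.1).im| ≤ ‖z - p.1‖ := Complex.abs_im_le_norm _
        have h3 : |z.im| ≤ |p.1.im| + |(z - p.1).im| := by
          have : z.im = p.1.im + (z - p.1).im := by simp
          rw [this]; exact abs_add_le _ _
        linarith
      show |z.im| + t / lam < 1
      have hsum : δ + t / lam = t / lam' := by simp only [hδdef]; ring
      clear_value t δ
      linarith
    have hdiff : ∀ z ∈ Metric.closedBall p.1 δ,
        DifferentiableAt ℂ (fun x => v (x, p.2)) z := by
      intro z hz
      exact ((hv _ (hsub z hz)).differentiableAt).comp z
        (differentiableAt_id.prodMk (differentiableAt_const _))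
    have hbnd : ∀ z ∈ Metric.closedBall p.1 δ, ‖v (z, p.2)‖ ≤ M :=
      fun z hz => hM _ (hsub z hz)
    have hkey : ‖deriv (fun x => v (x, p.2)) p.1‖ ≤ M / δ := cauchyBound hδ hdiff hbnd
    calc ‖p.2 * pdx v p‖ = t * ‖pdx v p‖ := by rw [norm_mul]
      _ ≤ t * (M / δ) := mul_le_mul_of_nonneg_left hkey htpos.le
      _ = lam * lam' / (lam - lam') * M := by
          simp only [hδdef]
          have h5 : t / lam' - t / lam = t * (lam - lam') / (lam * lam') := by
            field_simp
          rw [h5]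
          rw [div_div_eq_mul_div]
          field_simp

lemma yEst {lam lam' : ℝ} (hlam' : 0 < lam') (hll : lam' < lam) {v : ℂ × ℂ → ℂ} {M : ℝ}
    (hv : AnalyticOnNhd ℂ v (Dtri lam)) (hM : ∀ q ∈ Dtri lam, ‖v q‖ ≤ M)
    {p : ℂ × ℂ} (hp : p ∈ Dtri lam') :
    ‖p.2 * pdy v p‖ ≤ lam' / (lam - lam') * M := by
  have hlam : 0 < lam := hlam'.trans hll
  have hdd : 0 < lam - lam' := by linarith
  have hp' : |p.1.im| + ‖p.2‖ / lam' < 1 := hp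
  have hnn : 0 ≤ ‖p.2‖ / lam' := div_nonneg (norm_nonneg _) hlam'.le
  have h1a : 0 < 1 - |p.1.im| := by linarith
  have h2 : ‖p.2‖ < lam' * (1 - |p.1.im|) := by
    have : ‖p.2‖ / lam' < 1 - |p.1.im| := by linarith
    calc ‖p.2‖ = ‖p.2‖ / lam' * lam' := by field_simp
      _ < (1 - |p.1.im|) * lam' := by
          exact mul_lt_mul_of_pos_right this hlam'
      _ = lam' * (1 - |p.1.im|) := by ring
  have hpD : p ∈ Dtri lam := by
    have h1 : ‖p.2‖ / lam ≤ ‖p.2‖ / lam' :=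
      div_le_div_of_nonneg_left (norm_nonneg _) hlam' hll.le
    show |p.1.im| + ‖p.2‖ / lam < 1
    linarith
  have hM0 : 0 ≤ M := le_trans (norm_nonneg _) (hM p hpD)
  set δ := (lam - lam') * (1 - |p.1.im|) with hδdef
  have hδ : 0 < δ := mul_pos hdd h1a
  have hsub : ∀ w ∈ Metric.closedBall p.2 δ, (p.1, w) ∈ Dtri lam := by
    intro w hw
    have hw' : ‖w - p.2‖ ≤ δ := by
      rw [Metric.mem_closedBall, dist_eq_norm] at hw; exact hw
    have h3 : ‖w‖ ≤ ‖p.2‖ + δ := by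
      have := norm_sub_norm_le w p.2
      linarith
    have h4 : ‖w‖ < lam * (1 - |p.1.im|) := by
      simp only [hδdef] at h3
      nlinarith
    show |p.1.im| + ‖w‖ / lam < 1
    have h5 : ‖w‖ / lam < 1 - |p.1.im| := (div_lt_iff₀ hlam).mpr (by nlinarith)
    linarith
  have hdiff : ∀ w ∈ Metric.closedBall p.2 δ,
      DifferentiableAt ℂ (fun y => v (p.1, y)) w := by
    intro w hw
    exact ((hv _ (hsub w hw)).differentiableAt).comp w
      ((differentiableAt_const _).prodMk differentiableAt_id)
  have hbnd : ∀ w ∈ Metric.closedBall p.2 δ, ‖v (p.1, w)‖ ≤ M :=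
    fun w hw => hM _ (hsub w hw)
  have hkey : ‖deriv (fun y => v (p.1, y)) p.2‖ ≤ M / δ := cauchyBound hδ hdiff hbnd
  calc ‖p.2 * pdy v p‖ = ‖p.2‖ * ‖pdy v p‖ := by rw [norm_mul]
    _ ≤ (lam' * (1 - |p.1.im|)) * (M / δ) := by
        apply mul_le_mul h2.le hkey (norm_nonneg _)
        positivity
    _ = lam' / (lam - lam') * M := by
        simp only [hδdef]
        field_simp

/-- `pdx` preserves analyticity. -/
lemma pdx_analyticOnNhd {v : ℂ × ℂ → ℂ} {S : Set (ℂ × ℂ)}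
    (hv : AnalyticOnNhd ℂ v S) : AnalyticOnNhd ℂ (pdx v) S := by
  intro p hp
  have h := hv p hp
  have hev : (fun q : ℂ × ℂ => fderiv ℂ v q ((1 : ℂ), (0 : ℂ))) =ᶠ[nhds p] pdx v := by
    filter_upwards [h.eventually_analyticAt] with q hq
    have hd := hq.differentiableAt
    have hg : HasDerivAt (fun x : ℂ => (x, q.2)) ((1 : ℂ), (0 : ℂ)) q.1 :=
      (hasDerivAt_id q.1).prodMk (hasDerivAt_const q.1 q.2)
    have hc : HasDerivAt (fun x : ℂ => v (x, q.2)) (fderiv ℂ v q ((1 : ℂ), (0 : ℂ))) q.1 :=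
      hd.hasFDerivAt.comp_hasDerivAt q.1 hg
    exact (hc.deriv).symm
  have han : AnalyticAt ℂ (fun q : ℂ × ℂ => fderiv ℂ v q ((1 : ℂ), (0 : ℂ))) p :=
    ((ContinuousLinearMap.apply ℂ ℂ ((1 : ℂ), (0 : ℂ))).analyticAt
      (fderiv ℂ v p)).comp h.fderiv
  exact han.congr hev

/-- `pdy` preserves analyticity. -/
lemma pdy_analyticOnNhd {v : ℂ × ℂ → ℂ} {S : Set (ℂ × ℂ)}
    (hv : AnalyticOnNhd ℂ v S) : AnalyticOnNhd ℂ (pdy v) S := by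
  intro p hp
  have h := hv p hp
  have hev : (fun q : ℂ × ℂ => fderiv ℂ v q ((0 : ℂ), (1 : ℂ))) =ᶠ[nhds p] pdy v := by
    filter_upwards [h.eventually_analyticAt] with q hq
    have hd := hq.differentiableAt
    have hg : HasDerivAt (fun y : ℂ => (q.1, y)) ((0 : ℂ), (1 : ℂ)) q.2 :=
      (hasDerivAt_const q.2 q.1).prodMk (hasDerivAt_id q.2)
    have hc : HasDerivAt (fun y : ℂ => v (q.1, y)) (fderiv ℂ v q ((0 : ℂ), (1 : ℂ))) q.2 :=
      hd.hasFDerivAt.comp_hasDerivAt q.2 hg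
    exact (hc.deriv).symm
  have han : AnalyticAt ℂ (fun q : ℂ × ℂ => fderiv ℂ v q ((0 : ℂ), (1 : ℂ))) p :=
    ((ContinuousLinearMap.apply ℂ ℂ ((0 : ℂ), (1 : ℂ))).analyticAt
      (fderiv ℂ v p)).comp h.fderiv
  exact han.congr hev

lemma pdyIter_analyticOnNhd {v : ℂ × ℂ → ℂ} {S : Set (ℂ × ℂ)}
    (hv : AnalyticOnNhd ℂ v S) (k : ℕ) : AnalyticOnNhd ℂ (pdy^[k] v) S := by
  induction k with
  | zero => exact hv
  | succ k ih => rw [Function.iterate_succ_apply']; exact pdy_analyticOnNhd ih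

lemma pdIter_analyticOnNhd {v : ℂ × ℂ → ℂ} {S : Set (ℂ × ℂ)}
    (hv : AnalyticOnNhd ℂ v S) (j k : ℕ) :
    AnalyticOnNhd ℂ (pdx^[j] (pdy^[k] v)) S := by
  induction j with
  | zero => exact pdyIter_analyticOnNhd hv k
  | succ j ih => rw [Function.iterate_succ_apply']; exact pdx_analyticOnNhd ih

lemma isOpen_Dtri (lam : ℝ) : IsOpen (Dtri lam) := by
  have hc : Continuous fun p : ℂ × ℂ => |p.1.im| + ‖p.2‖ / lam := by fun_prop
  exact isOpen_lt hc continuous_const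

lemma pdx_congr {f g : ℂ × ℂ → ℂ} {S : Set (ℂ × ℂ)} (hS : IsOpen S)
    (h : Set.EqOn f g S) {p : ℂ × ℂ} (hp : p ∈ S) : pdx f p = pdx g p := by
  apply Filter.EventuallyEq.deriv_eq
  have hSx : IsOpen {x : ℂ | (x, p.2) ∈ S} :=
    hS.preimage (continuous_id.prodMk continuous_const)
  have hpx : p.1 ∈ {x : ℂ | (x, p.2) ∈ S} := hp
  filter_upwards [hSx.mem_nhds hpx] with x hx using h hx

lemma pdy_congr {f g : ℂ × ℂ → ℂ} {S : Set (ℂ × ℂ)} (hS : IsOpen S)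
    (h : Set.EqOn f g S) {p : ℂ × ℂ} (hp : p ∈ S) : pdy f p = pdy g p := by
  apply Filter.EventuallyEq.deriv_eq
  have hSy : IsOpen {y : ℂ | (p.1, y) ∈ S} :=
    hS.preimage (continuous_const.prodMk continuous_id)
  have hpy : p.2 ∈ {y : ℂ | (p.1, y) ∈ S} := hp
  filter_upwards [hSy.mem_nhds hpy] with y hy using h hy

lemma pdxIter_congr {f g : ℂ × ℂ → ℂ} {S : Set (ℂ × ℂ)} (hS : IsOpen S)
    (h : Set.EqOn f g S) (j : ℕ) : Set.EqOn (pdx^[j] f) (pdx^[j] g) S := by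
  induction j with
  | zero => exact h
  | succ j ih =>
      intro p hp
      rw [Function.iterate_succ_apply', Function.iterate_succ_apply']
      exact pdx_congr hS ih hp

/-- The key structure formula for derivatives of `u(x,y) = y·ū(x,y)`. -/
lemma formula {lam : ℝ} {ub : ℂ × ℂ → ℂ} (hana : AnalyticOnNhd ℂ ub (Dtri lam))
    (j k : ℕ) :
    Set.EqOn (pdx^[j] (pdy^[k] (fun p : ℂ × ℂ => p.2 * ub p)))
      (fun p : ℂ × ℂ => p.2 * pdx^[j] (pdy^[k] ub) p
        + (k : ℂ) * pdx^[j] (pdy^[k - 1] ub) p) (Dtri lam) := by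
  have hO := isOpen_Dtri lam
  -- Step 1: the case `j = 0`.
  have claim : ∀ k : ℕ, Set.EqOn (pdy^[k] (fun p : ℂ × ℂ => p.2 * ub p))
      (fun p : ℂ × ℂ => p.2 * pdy^[k] ub p + (k : ℂ) * pdy^[k - 1] ub p) (Dtri lam) := by
    intro k
    induction k with
    | zero => intro p _; simp
    | succ k ih =>
        intro p hp
        rw [Function.iterate_succ_apply']
        rw [show pdy (pdy^[k] fun p : ℂ × ℂ => p.2 * ub p) p
            = pdy (fun p : ℂ × ℂ => p.2 * pdy^[k] ub p + (k : ℂ) * pdy^[k - 1] ub p) p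
          from pdy_congr hO ih hp]
        have hGan : AnalyticAt ℂ (pdy^[k] ub) p := pdyIter_analyticOnNhd hana k p hp
        have hHan : AnalyticAt ℂ (pdy^[k - 1] ub) p := pdyIter_analyticOnNhd hana (k - 1) p hp
        have dG : DifferentiableAt ℂ (fun y => pdy^[k] ub (p.1, y)) p.2 :=
          (hGan.differentiableAt).comp p.2
            ((differentiableAt_const _).prodMk differentiableAt_id)
        have dH : DifferentiableAt ℂ (fun y => pdy^[k - 1] ub (p.1, y)) p.2 :=
          (hHan.differentiableAt).comp p.2
            ((differentiableAt_const _).prodMk differentiableAt_id)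
        have h1 : HasDerivAt (fun y : ℂ => y * pdy^[k] ub (p.1, y))
            (1 * pdy^[k] ub (p.1, p.2) + p.2 * deriv (fun y => pdy^[k] ub (p.1, y)) p.2) p.2 :=
          (hasDerivAt_id p.2).mul dG.hasDerivAt
        have h2 : HasDerivAt (fun y : ℂ => (k : ℂ) * pdy^[k - 1] ub (p.1, y))
            ((k : ℂ) * deriv (fun y => pdy^[k - 1] ub (p.1, y)) p.2) p.2 :=
          dH.hasDerivAt.const_mul _
        have h3 := (h1.add h2).deriv
        show pdy _ p = _
        rw [pdy] at *
        simp only [] at h3 ⊢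
        refine h3.trans ?_
        have e1 : deriv (fun y => pdy^[k] ub (p.1, y)) p.2 = pdy (pdy^[k] ub) p := rfl
        have e2 : pdy (pdy^[k] ub) p = pdy^[k + 1] ub p :=
          (Function.iterate_succ_apply' pdy k ub ▸ rfl)
        have e3 : (k : ℂ) * deriv (fun y => pdy^[k - 1] ub (p.1, y)) p.2
            = (k : ℂ) * pdy^[k] ub p := by
          cases k with
          | zero => simp
          | succ m =>
              have : deriv (fun y => pdy^[m + 1 - 1] ub (p.1, y)) p.2
                  = pdy (pdy^[m] ub) p := rfl
              rw [this, ← Function.iterate_succ_apply' pdy m ub]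
        have e4 : pdy^[k] ub (p.1, p.2) = pdy^[k] ub p := rfl
        rw [e1, e2, e3, e4]
        push_cast
        ring
  -- Step 2: induction on `j`.
  induction j with
  | zero => exact claim k
  | succ j ih =>
      intro p hp
      rw [Function.iterate_succ_apply']
      rw [show pdx (pdx^[j] (pdy^[k] fun p : ℂ × ℂ => p.2 * ub p)) p
          = pdx (fun p : ℂ × ℂ => p.2 * pdx^[j] (pdy^[k] ub) p
              + (k : ℂ) * pdx^[j] (pdy^[k - 1] ub) p) p
        from pdx_congr hO ih hp]
      have hAan : AnalyticAt ℂ (pdx^[j] (pdy^[k] ub)) p := pdIter_analyticOnNhd hana j k p hp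
      have hBan : AnalyticAt ℂ (pdx^[j] (pdy^[k - 1] ub)) p :=
        pdIter_analyticOnNhd hana j (k - 1) p hp
      have dA : DifferentiableAt ℂ (fun x => pdx^[j] (pdy^[k] ub) (x, p.2)) p.1 :=
        (hAan.differentiableAt).comp p.1 (differentiableAt_id.prodMk (differentiableAt_const _))
      have dB : DifferentiableAt ℂ (fun x => pdx^[j] (pdy^[k - 1] ub) (x, p.2)) p.1 :=
        (hBan.differentiableAt).comp p.1 (differentiableAt_id.prodMk (differentiableAt_const _))
      have h1 : HasDerivAt (fun x : ℂ => p.2 * pdx^[j] (pdy^[k] ub) (x, p.2))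
          (p.2 * deriv (fun x => pdx^[j] (pdy^[k] ub) (x, p.2)) p.1) p.1 :=
        dA.hasDerivAt.const_mul _
      have h2 : HasDerivAt (fun x : ℂ => (k : ℂ) * pdx^[j] (pdy^[k - 1] ub) (x, p.2))
          ((k : ℂ) * deriv (fun x => pdx^[j] (pdy^[k - 1] ub) (x, p.2)) p.1) p.1 :=
        dB.hasDerivAt.const_mul _
      have h3 := (h1.add h2).deriv
      show pdx _ p = _
      rw [pdx] at *
      simp only [] at h3 ⊢
      refine h3.trans ?_
      have e1 : deriv (fun x => pdx^[j] (pdy^[k] ub) (x, p.2)) p.1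
          = pdx^[j + 1] (pdy^[k] ub) p := by
        rw [Function.iterate_succ_apply' pdx j (pdy^[k] ub)]; rfl
      have e2 : deriv (fun x => pdx^[j] (pdy^[k - 1] ub) (x, p.2)) p.1
          = pdx^[j + 1] (pdy^[k - 1] ub) p := by
        rw [Function.iterate_succ_apply' pdx j (pdy^[k - 1] ub)]; rfl
      rw [e1, e2]

lemma Dtri_mono {lam lam' : ℝ} (h0 : 0 < lam') (h : lam' ≤ lam) :
    Dtri lam' ⊆ Dtri lam := by
  intro p hp
  have h1 : ‖p.2‖ / lam ≤ ‖p.2‖ / lam' :=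
    div_le_div_of_nonneg_left (norm_nonneg _) h0 h
  have hp' : |p.1.im| + ‖p.2‖ / lam' < 1 := hp
  show |p.1.im| + ‖p.2‖ / lam < 1
  linarith


lemma triSup_le_of_forall {lam : ℝ} {f : ℂ × ℂ → ℂ} {C : ℝ}
    (h : ∀ p ∈ Dtri lam, ‖f p‖ ≤ C) : triSup lam f ≤ ENNReal.ofReal C := by
  refine iSup₂_le fun p hp => ?_
  rw [← ENNReal.ofReal_coe_nnreal, coe_nnnorm]
  exact ENNReal.ofReal_le_ofReal (h p hp)

lemma forall_le_of_triSup {lam : ℝ} {f : ℂ × ℂ → ℂ} (h : triSup lam f ≠ ⊤) :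
    ∀ p ∈ Dtri lam, ‖f p‖ ≤ (triSup lam f).toReal := by
  intro p hp
  have h1 : (‖f p‖₊ : ℝ≥0∞) ≤ triSup lam f :=
    le_iSup₂ (f := fun p (_ : p ∈ Dtri lam) => (‖f p‖₊ : ℝ≥0∞)) p hp
  have h2 := ENNReal.toReal_mono h h1
  simpa using h2

lemma le_triCr {lam : ℝ} {r j k : ℕ} (h : j + k ≤ r) (ub : ℂ × ℂ → ℂ) :
    triSup lam (pdx^[j] (pdy^[k] ub)) ≤ triCr lam r ub := by
  apply le_iSup_of_le j
  apply le_iSup_of_le k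
  exact le_iSup_of_le h le_rfl

end CEaux


open CEaux

/-- **Lemma (Cauchy estimates on `D_λ`).** -/
theorem cauchy_estimates_on_triangular_domain
    (lam : ℝ) (hlam : 0 < lam) (ub : ℂ × ℂ → ℂ)
    (hper : Per1' ub) (hana : AnalyticOnNhd ℂ ub (Dtri lam)) :
    ∀ (r : ℕ), 1 ≤ r → ∀ lam' : ℝ, 0 < lam' → lam' < lam →
      triCr lam' r (fun p => p.2 * ub p) ≤
        ENNReal.ofReal (((r : ℝ) + lam') / (1 - lam' / lam)) * triCr lam (r - 1) ub ∧
      triSup lam' (pdx fun p => p.2 * ub p) ≤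
        ENNReal.ofReal (lam * lam' / (lam - lam')) * triSup lam ub ∧
      triSup lam' (pdy fun p => p.2 * ub p) ≤
        ENNReal.ofReal (lam / (lam - lam')) * triSup lam ub := by
  intro r hr lam' hlam' hll
  have hdd : 0 < lam - lam' := by linarith
  have hden : 0 < 1 - lam' / lam := by
    rw [sub_pos, div_lt_one hlam]; exact hll
  have hsub : Dtri lam' ⊆ Dtri lam := Dtri_mono hlam' hll.le
  have hr1 : (1 : ℝ) ≤ (r : ℝ) := by exact_mod_cast hr
  refine ⟨?_, ?_, ?_⟩
  · -- main estimate
    by_cases htop : triCr lam (r - 1) ub = ⊤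
    · rw [htop, ENNReal.mul_top]
      · exact le_top
      · refine (ENNReal.ofReal_pos.mpr ?_).ne'
        positivity
    · set M := (triCr lam (r - 1) ub).toReal with hMdef
      have hM0 : 0 ≤ M := ENNReal.toReal_nonneg
      have hM : ∀ j k : ℕ, j + k ≤ r - 1 → ∀ p ∈ Dtri lam,
          ‖pdx^[j] (pdy^[k] ub) p‖ ≤ M := by
        intro j k hjk p hp
        have hle := le_triCr (lam := lam) hjk ub
        have hne : triSup lam (pdx^[j] (pdy^[k] ub)) ≠ ⊤ := ne_top_of_le_ne_top htop hle
        exact (forall_le_of_triSup hne p hp).trans (ENNReal.toReal_mono htop hle)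
      set C : ℝ := ((r : ℝ) + lam') / (1 - lam' / lam) with hCdef
      have hCform : C = lam * ((r : ℝ) + lam') / (lam - lam') := by
        rw [hCdef, div_eq_div_iff hden.ne' hdd.ne']
        field_simp
      have hCpos : 0 < C := by rw [hCdef]; positivity
      have hrpos : (0:ℝ) < (r:ℝ) := lt_of_lt_of_le one_pos hr1
      have hpt : ∀ j k : ℕ, j + k ≤ r → ∀ p ∈ Dtri lam',
          ‖pdx^[j] (pdy^[k] (fun p : ℂ × ℂ => p.2 * ub p)) p‖ ≤ C * M := by
        intro j k hjk p hp
        have hf := formula hana j k (hsub hp)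
        rw [hf]
        simp only []
        have hterm2 : ‖(k : ℂ) * pdx^[j] (pdy^[k - 1] ub) p‖ ≤ (k : ℝ) * M := by
          rcases Nat.eq_zero_or_pos k with hk | hk
          · subst hk; simp
          · rw [norm_mul, Complex.norm_natCast]
            exact mul_le_mul_of_nonneg_left
              (hM j (k - 1) (by omega) p (hsub hp)) (Nat.cast_nonneg k)
        have hkr : (k : ℝ) ≤ (r : ℝ) := by exact_mod_cast (by omega : k ≤ r)
        have htri := norm_add_le (p.2 * pdx^[j] (pdy^[k] ub) p)
          ((k : ℂ) * pdx^[j] (pdy^[k - 1] ub) p)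
        match j, k with
        | 0, 0 =>
            have hA : ‖p.2 * pdx^[0] (pdy^[0] ub) p‖ ≤ lam' * M := by
              rw [norm_mul]
              have hy : ‖p.2‖ ≤ lam' := by
                have hp' : |p.1.im| + ‖p.2‖ / lam' < 1 := hp
                have h1 : ‖p.2‖ / lam' < 1 := by
                  have := abs_nonneg p.1.im; linarith
                nlinarith [(div_lt_one hlam').mp h1]
              have hub : ‖pdx^[0] (pdy^[0] ub) p‖ ≤ M := hM 0 0 (by omega) p (hsub hp)
              exact mul_le_mul hy hub (norm_nonneg _) hlam'.le
            have hC2 : lam' ≤ C := by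
              rw [hCform, le_div_iff₀ hdd]
              nlinarith [sq_nonneg lam', mul_pos hlam hrpos]
            have hY : ‖((0:ℕ):ℂ) * pdx^[0] (pdy^[0 - 1] ub) p‖ = 0 := by simp
            calc ‖p.2 * pdx^[0] (pdy^[0] ub) p + ((0:ℕ):ℂ) * pdx^[0] (pdy^[0 - 1] ub) p‖
                ≤ lam' * M := by linarith
              _ ≤ C * M := mul_le_mul_of_nonneg_right hC2 hM0
        | 0, (m+1) =>
            have hA : ‖p.2 * pdx^[0] (pdy^[m+1] ub) p‖ ≤ lam' / (lam - lam') * M := by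
              have he : pdx^[0] (pdy^[m+1] ub) = pdy (pdy^[m] ub) := by
                rw [Function.iterate_zero_apply, Function.iterate_succ_apply']
              rw [he]
              exact yEst hlam' hll (pdyIter_analyticOnNhd hana m)
                (fun q hq => by
                  have := hM 0 m (by omega) q hq
                  simpa using this) hp
            have hC2 : lam' / (lam - lam') + ((m+1 : ℕ) : ℝ) ≤ C := by
              rw [hCform, div_add' _ _ _ hdd.ne', div_le_div_iff₀ hdd hdd]
              have hmr : ((m+1 : ℕ) : ℝ) ≤ (r : ℝ) := by
                exact_mod_cast (by omega : m + 1 ≤ r)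
              have key : lam' + ((m+1:ℕ):ℝ) * (lam - lam') ≤ lam * ((r:ℝ) + lam') := by
                nlinarith [mul_le_mul_of_nonneg_right hmr hdd.le, mul_pos hlam hlam',
                  mul_le_mul_of_nonneg_right hr1 hlam'.le]
              exact mul_le_mul_of_nonneg_right key hdd.le
            calc ‖p.2 * pdx^[0] (pdy^[m+1] ub) p + ((m+1:ℕ) : ℂ) * pdx^[0] (pdy^[m+1-1] ub) p‖
                ≤ lam' / (lam - lam') * M + ((m+1:ℕ) : ℝ) * M := by linarith
              _ = (lam' / (lam - lam') + ((m+1:ℕ) : ℝ)) * M := by ring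
              _ ≤ C * M := mul_le_mul_of_nonneg_right hC2 hM0
        | (i+1), k =>
            have hA : ‖p.2 * pdx^[i+1] (pdy^[k] ub) p‖ ≤ lam * lam' / (lam - lam') * M := by
              have he : pdx^[i+1] (pdy^[k] ub) = pdx (pdx^[i] (pdy^[k] ub)) :=
                Function.iterate_succ_apply' pdx i (pdy^[k] ub)
              rw [he]
              exact xEst hlam' hll (pdIter_analyticOnNhd hana i k)
                (hM i k (by omega)) hp
            have hC2 : lam * lam' / (lam - lam') + (k : ℝ) ≤ C := by
              rw [hCform, div_add' _ _ _ hdd.ne', div_le_div_iff₀ hdd hdd]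
              have key : lam * lam' + (k:ℝ) * (lam - lam') ≤ lam * ((r:ℝ) + lam') := by
                nlinarith [mul_le_mul_of_nonneg_right hkr hdd.le, mul_pos hrpos hlam']
              exact mul_le_mul_of_nonneg_right key hdd.le
            calc ‖p.2 * pdx^[i+1] (pdy^[k] ub) p + (k : ℂ) * pdx^[i+1] (pdy^[k-1] ub) p‖
                ≤ lam * lam' / (lam - lam') * M + (k : ℝ) * M := by linarith
              _ = (lam * lam' / (lam - lam') + (k : ℝ)) * M := by ring
              _ ≤ C * M := mul_le_mul_of_nonneg_right hC2 hM0
      calc triCr lam' r (fun p : ℂ × ℂ => p.2 * ub p)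
          ≤ ENNReal.ofReal (C * M) :=
            iSup_le fun j => iSup_le fun k => iSup_le fun hjk =>
              triSup_le_of_forall (hpt j k hjk)
        _ = ENNReal.ofReal C * ENNReal.ofReal M := ENNReal.ofReal_mul hCpos.le
        _ = ENNReal.ofReal C * triCr lam (r - 1) ub := by
            rw [hMdef, ENNReal.ofReal_toReal htop]
  · -- x derivative
    by_cases htop : triSup lam ub = ⊤
    · rw [htop, ENNReal.mul_top]
      · exact le_top
      · refine (ENNReal.ofReal_pos.mpr (by positivity)).ne'
    · set M := (triSup lam ub).toReal with hMdef
      have hM := forall_le_of_triSup htop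
      have hpt : ∀ p ∈ Dtri lam', ‖pdx (fun p : ℂ × ℂ => p.2 * ub p) p‖ ≤
          lam * lam' / (lam - lam') * M := by
        intro p hp
        have hx : pdx (fun p : ℂ × ℂ => p.2 * ub p) p = p.2 * pdx ub p := by
          rw [pdx]
          have he : (fun x => (fun p : ℂ × ℂ => p.2 * ub p) (x, p.2))
              = fun x => p.2 * ub (x, p.2) := rfl
          rw [he, deriv_const_mul_field]
          rfl
        rw [hx]
        exact xEst hlam' hll hana hM hp
      calc triSup lam' (pdx fun p : ℂ × ℂ => p.2 * ub p)
          ≤ ENNReal.ofReal (lam * lam' / (lam - lam') * M) := triSup_le_of_forall hpt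
        _ = ENNReal.ofReal (lam * lam' / (lam - lam')) * ENNReal.ofReal M :=
            ENNReal.ofReal_mul (by positivity)
        _ = ENNReal.ofReal (lam * lam' / (lam - lam')) * triSup lam ub := by
            rw [hMdef, ENNReal.ofReal_toReal htop]
  · -- y derivative
    by_cases htop : triSup lam ub = ⊤
    · rw [htop, ENNReal.mul_top]
      · exact le_top
      · refine (ENNReal.ofReal_pos.mpr (by positivity)).ne'
    · set M := (triSup lam ub).toReal with hMdef
      have hM := forall_le_of_triSup htop
      have hM0 : 0 ≤ M := ENNReal.toReal_nonneg
      have hpt : ∀ p ∈ Dtri lam', ‖pdy (fun p : ℂ × ℂ => p.2 * ub p) p‖ ≤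
          lam / (lam - lam') * M := by
        intro p hp
        have hpD : p ∈ Dtri lam := hsub hp
        have dG : DifferentiableAt ℂ (fun y => ub (p.1, y)) p.2 :=
          ((hana p hpD).differentiableAt).comp p.2
            ((differentiableAt_const _).prodMk differentiableAt_id)
        have h1 : HasDerivAt (fun y : ℂ => y * ub (p.1, y))
            (1 * ub (p.1, p.2) + p.2 * deriv (fun y => ub (p.1, y)) p.2) p.2 :=
          (hasDerivAt_id p.2).mul dG.hasDerivAt
        have hy : pdy (fun p : ℂ × ℂ => p.2 * ub p) p = ub p + p.2 * pdy ub p := by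
          rw [pdy]
          have he : (fun y => (fun p : ℂ × ℂ => p.2 * ub p) (p.1, y))
              = fun y : ℂ => y * ub (p.1, y) := rfl
          rw [he, h1.deriv]
          simp only [one_mul]
          rfl
        rw [hy]
        have h2 := norm_add_le (ub p) (p.2 * pdy ub p)
        have h3 : ‖ub p‖ ≤ M := hM p hpD
        have h4 : ‖p.2 * pdy ub p‖ ≤ lam' / (lam - lam') * M := yEst hlam' hll hana hM hp
        have h5 : M + lam' / (lam - lam') * M = lam / (lam - lam') * M := by
          field_simp
          ring
        linarith
      calc triSup lam' (pdy fun p : ℂ × ℂ => p.2 * ub p)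
          ≤ ENNReal.ofReal (lam / (lam - lam') * M) := triSup_le_of_forall hpt
        _ = ENNReal.ofReal (lam / (lam - lam')) * ENNReal.ofReal M :=
            ENNReal.ofReal_mul (by positivity)
        _ = ENNReal.ofReal (lam / (lam - lam')) * triSup lam ub := by
            rw [hMdef, ENNReal.ofReal_toReal htop]


end
end
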